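/- Let m, K be natural numbers with m ≥ 1, w : Fin K → ℝ with w(v) ≥ 0 for all v, and N : Fin K → Finset (Fin m). Define F(x) = ∑_{v} w(v)·(1 − Real.exp(−∑_{j ∈ N(v)} x(j))), and W = max_{j ∈ Fin m} ∑_{v : j ∈ N(v)} w(v). Then for all x, y : Fin m → ℝ with x(j) ≥ 0 and y(j) ≥ 0 for all j, |F(x) − F(y)| ≤ √m · W · √(∑_{j} (x(j) − y(j))²). -/

import Mathlib

lemma exp_lip_nonpos {a b : ℝ} (ha : a ≤ 0) (hb : b ≤ 0) :
    |Real.exp a - Real.exp b| ≤ |a - b| := by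
  wlog h : b ≤ a generalizing a b
  · rw [abs_sub_comm, abs_sub_comm a b]; exact this hb ha (le_of_not_ge h)
  rw [abs_of_nonneg (sub_nonneg.2 (Real.exp_le_exp.2 h)), abs_of_nonneg (sub_nonneg.2 h)]
  have h1 : Real.exp a - Real.exp b = Real.exp a * (1 - Real.exp (b - a)) := by
    rw [mul_sub, mul_one, ← Real.exp_add]; ring_nf
  rw [h1]
  calc Real.exp a * (1 - Real.exp (b - a)) ≤ 1 * (1 - Real.exp (b - a)) := by
        apply mul_le_mul_of_nonneg_right (Real.exp_le_one_iff.2 ha)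
        exact sub_nonneg.2 (Real.exp_le_one_iff.2 (by linarith))
    _ ≤ a - b := by have := Real.add_one_le_exp (b - a); linarith

/-- **Lipschitz/gradient bound for the Poisson rounding surrogate.** For the coverage
surrogate `F x = ∑ v, w v · (1 − exp(−∑_{j ∈ N v} x j))` with nonnegative weights, and
`W = max_j ∑_{v : j ∈ N v} w v` the maximum single-item value, `F` is `√m · W`-Lipschitz in
the Euclidean norm on the nonnegative orthant. -/
theorem poisson_rounding_lipschitz (m K : ℕ) (hm : 1 ≤ m) (w : Fin K → ℝ)
    (hw : ∀ v, 0 ≤ w v) (N : Fin K → Finset (Fin m)) :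
    ∀ x y : Fin m → ℝ, (∀ j, 0 ≤ x j) → (∀ j, 0 ≤ y j) →
      |(∑ v : Fin K, w v * (1 - Real.exp (-∑ j ∈ N v, x j)))
          - ∑ v : Fin K, w v * (1 - Real.exp (-∑ j ∈ N v, y j))|
        ≤ Real.sqrt m *
            (Finset.univ.sup' (Finset.univ_nonempty_iff.mpr ⟨⟨0, hm⟩⟩)
              (fun j : Fin m => ∑ v ∈ Finset.univ.filter (fun v : Fin K => j ∈ N v), w v)) *
            Real.sqrt (∑ j : Fin m, (x j - y j) ^ 2) := by
  intro x y hx hy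
  set W := Finset.univ.sup' (Finset.univ_nonempty_iff.mpr ⟨⟨0, hm⟩⟩)
      (fun j : Fin m => ∑ v ∈ Finset.univ.filter (fun v : Fin K => j ∈ N v), w v) with hW
  have hWle : ∀ j : Fin m, (∑ v ∈ Finset.univ.filter (fun v : Fin K => j ∈ N v), w v) ≤ W :=
    fun j => Finset.le_sup' (fun j : Fin m => ∑ v ∈ Finset.univ.filter (fun v : Fin K => j ∈ N v), w v) (Finset.mem_univ j)
  have hW0 : 0 ≤ W := le_trans (Finset.sum_nonneg fun v _ => hw v) (hWle ⟨0, hm⟩)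
  set d : Fin m → ℝ := fun j => |x j - y j| with hd
  have hd0 : ∀ j, 0 ≤ d j := fun j => abs_nonneg _
  -- Step 1
  have step1 : |(∑ v : Fin K, w v * (1 - Real.exp (-∑ j ∈ N v, x j)))
      - ∑ v : Fin K, w v * (1 - Real.exp (-∑ j ∈ N v, y j))|
      ≤ ∑ v : Fin K, w v * ∑ j ∈ N v, d j := by
    rw [← Finset.sum_sub_distrib]
    refine le_trans (Finset.abs_sum_le_sum_abs _ _) (Finset.sum_le_sum fun v _ => ?_)
    have : w v * (1 - Real.exp (-∑ j ∈ N v, x j)) - w v * (1 - Real.exp (-∑ j ∈ N v, y j))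
        = w v * (Real.exp (-∑ j ∈ N v, y j) - Real.exp (-∑ j ∈ N v, x j)) := by ring
    rw [this, abs_mul, abs_of_nonneg (hw v)]
    apply mul_le_mul_of_nonneg_left _ (hw v)
    calc |Real.exp (-∑ j ∈ N v, y j) - Real.exp (-∑ j ∈ N v, x j)|
        ≤ |(-∑ j ∈ N v, y j) - -∑ j ∈ N v, x j| := by
          apply exp_lip_nonpos <;>
            simp only [neg_nonpos] <;> exact Finset.sum_nonneg (fun j _ => by first | exact hy j | exact hx j)
      _ = |∑ j ∈ N v, (x j - y j)| := by rw [Finset.sum_sub_distrib]; ring_nf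
      _ ≤ ∑ j ∈ N v, d j := Finset.abs_sum_le_sum_abs _ _
  -- Step 2: swap sums
  have step2 : (∑ v : Fin K, w v * ∑ j ∈ N v, d j) ≤ W * ∑ j : Fin m, d j := by
    have swap : (∑ v : Fin K, w v * ∑ j ∈ N v, d j)
        = ∑ j : Fin m, (∑ v ∈ Finset.univ.filter (fun v : Fin K => j ∈ N v), w v) * d j := by
      simp_rw [Finset.mul_sum, Finset.sum_mul]
      rw [Finset.sum_comm' (s := Finset.univ) (t := N) (t' := Finset.univ)
        (s' := fun j => Finset.univ.filter (fun v : Fin K => j ∈ N v))]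
      intro v j; simp
    rw [swap, Finset.mul_sum]
    exact Finset.sum_le_sum fun j _ => mul_le_mul_of_nonneg_right (hWle j) (hd0 j)
  -- Step 3: Cauchy-Schwarz
  have step3 : (∑ j : Fin m, d j) ≤ Real.sqrt m * Real.sqrt (∑ j : Fin m, (x j - y j) ^ 2) := by
    rw [← Real.sqrt_mul (Nat.cast_nonneg m)]
    rw [Real.le_sqrt (Finset.sum_nonneg fun j _ => hd0 j)]
    have := sq_sum_le_card_mul_sum_sq (s := (Finset.univ : Finset (Fin m))) (f := d)
    simp only [Finset.card_univ, Fintype.card_fin] at this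
    calc (∑ j : Fin m, d j) ^ 2 ≤ m * ∑ j : Fin m, d j ^ 2 := by exact_mod_cast this
      _ = m * ∑ j : Fin m, (x j - y j) ^ 2 := by simp [hd, sq_abs]
    · positivity
  calc _ ≤ W * ∑ j : Fin m, d j := le_trans step1 step2
    _ ≤ W * (Real.sqrt m * Real.sqrt (∑ j : Fin m, (x j - y j) ^ 2)) :=
        mul_le_mul_of_nonneg_left step3 hW0
    _ = _ := by ring
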